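/- Let H1 be the graph on vertices v1,...,v8 with edges v1v2, v1v3, v1v4, v2v3, v3v4, v2v5, v3v6, v4v7, v5v6, v6v7, v5v8, v7v8, v6v8, v2v7 (the block of the graph H from the paper: a hexagonal wheel-like 2-connected graph on 8 vertices consisting of the outer cycle v1v2v5v8v7v4 with chords and inner vertices v3, v6 joined as specified). Then H1 is (3,3,3,3,3,3,3,2)-list colourable with respect to the ordering v1,...,v8: for every list assignment with |l(vi)|=3 for i=1,...,7 and |l(v8)|=2, there is a proper colouring of H1 choosing each vertex's colour from its list. -/

import Mathlib

/-- The block `H₁` of the graph `H` from the paper, on vertices `0,…,7` standing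
for `v₁,…,v₈`, with edges `v₁v₂, v₁v₃, v₁v₄, v₂v₃, v₃v₄, v₂v₅, v₃v₆, v₄v₇, v₅v₆,
v₆v₇, v₅v₈, v₇v₈, v₆v₈, v₂v₇`. -/
def H1 : SimpleGraph (Fin 8) :=
  SimpleGraph.fromEdgeSet {s(0, 1), s(0, 2), s(0, 3), s(1, 2), s(2, 3), s(1, 4),
    s(2, 5), s(3, 6), s(4, 5), s(5, 6), s(4, 7), s(6, 7), s(5, 7), s(1, 6)}

lemma adj_elim {u v : Fin 8} (h : H1.Adj u v) (P : Fin 8 → Fin 8 → Prop)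
    (hsymm : ∀ a b, P a b → P b a)
    (h01 : P 0 1) (h02 : P 0 2) (h03 : P 0 3) (h12 : P 1 2) (h23 : P 2 3)
    (h14 : P 1 4) (h25 : P 2 5) (h36 : P 3 6) (h45 : P 4 5) (h56 : P 5 6)
    (h47 : P 4 7) (h67 : P 6 7) (h57 : P 5 7) (h16 : P 1 6) : P u v := by
  rw [H1, SimpleGraph.fromEdgeSet_adj] at h
  obtain ⟨hm, -⟩ := h
  simp only [Set.mem_insert_iff, Set.mem_singleton_iff, Sym2.eq_iff] at hm
  rcases hm with h|h|h|h|h|h|h|h|h|h|h|h|h|h <;>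
    rcases h with ⟨rfl,rfl⟩|⟨rfl,rfl⟩ <;>
    first | assumption | (apply hsymm; assumption)

lemma build (l : Fin 8 → Finset ℕ) (c0 c1 c2 c3 c4 c5 c6 c7 : ℕ)
    (m0 : c0 ∈ l 0) (m1 : c1 ∈ l 1) (m2 : c2 ∈ l 2) (m3 : c3 ∈ l 3)
    (m4 : c4 ∈ l 4) (m5 : c5 ∈ l 5) (m6 : c6 ∈ l 6) (m7 : c7 ∈ l 7)
    (e01 : c0 ≠ c1) (e02 : c0 ≠ c2) (e03 : c0 ≠ c3) (e12 : c1 ≠ c2) (e23 : c2 ≠ c3)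
    (e14 : c1 ≠ c4) (e25 : c2 ≠ c5) (e36 : c3 ≠ c6) (e45 : c4 ≠ c5) (e56 : c5 ≠ c6)
    (e47 : c4 ≠ c7) (e67 : c6 ≠ c7) (e57 : c5 ≠ c7) (e16 : c1 ≠ c6) :
    ∃ c : Fin 8 → ℕ, (∀ v, c v ∈ l v) ∧ ∀ u v, H1.Adj u v → c u ≠ c v := by
  classical
  let f : Fin 8 → ℕ := fun v => if v = 0 then c0 else if v = 1 then c1 else if v = 2 then c2
    else if v = 3 then c3 else if v = 4 then c4 else if v = 5 then c5
    else if v = 6 then c6 else c7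
  refine ⟨f, ?_, ?_⟩
  · intro v
    fin_cases v <;> simp_all [f]
  · intro u v h
    exact adj_elim h (fun a b => f a ≠ f b) (fun a b hab => (Ne.symm hab))
      (by simpa [f] using e01) (by simpa [f] using e02) (by simpa [f] using e03)
      (by simpa [f] using e12) (by simpa [f] using e23) (by simpa [f] using e14)
      (by simpa [f] using e25) (by simpa [f] using e36) (by simpa [f] using e45)
      (by simpa [f] using e56) (by simpa [f] using e47) (by simpa [f] using e67)
      (by simpa [f] using e57) (by simpa [f] using e16)

lemma pick_gen {s t : Finset ℕ} (h : t.card < s.card) : ∃ x ∈ s, x ∉ t := by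
  have := Finset.card_le_card_sdiff_add_card (s := s) (t := t)
  obtain ⟨x, hx⟩ := Finset.card_pos.mp (show 0 < (s \ t).card by omega)
  rw [Finset.mem_sdiff] at hx
  exact ⟨x, hx.1, hx.2⟩

lemma pick0 {s : Finset ℕ} (h : 1 ≤ s.card) : ∃ x, x ∈ s := by
  obtain ⟨x, hx⟩ := Finset.card_pos.mp (show 0 < s.card by omega); exact ⟨x, hx⟩

lemma pick1 {s : Finset ℕ} (h : 2 ≤ s.card) (a : ℕ) : ∃ x ∈ s, x ≠ a := by
  obtain ⟨x, hx, hx2⟩ := pick_gen (s := s) (t := {a}) (show (({a} : Finset ℕ)).card < s.card by simpa using by omega)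
  exact ⟨x, hx, by simpa using hx2⟩

lemma pick2 {s : Finset ℕ} (h : 3 ≤ s.card) (a b : ℕ) : ∃ x ∈ s, x ≠ a ∧ x ≠ b := by
  obtain ⟨x, hx, hx2⟩ := pick_gen (s := s) (t := {a, b})
    (lt_of_le_of_lt (Finset.card_insert_le a {b}) (show ({b} : Finset ℕ).card + 1 < s.card by simpa using by omega))
  simp only [Finset.mem_insert, Finset.mem_singleton] at hx2
  exact ⟨x, hx, by tauto⟩

lemma sdiff_card2 {s : Finset ℕ} (h : 3 ≤ s.card) (a : ℕ) : 2 ≤ (s \ {a}).card := by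
  have := Finset.card_le_card_sdiff_add_card (s := s) (t := {a})
  simp only [Finset.card_singleton] at this; omega

lemma sdiff_pair_card2 {s : Finset ℕ} (h : 3 ≤ s.card) {a b : ℕ} (hb : b ∉ s) :
    2 ≤ (s \ {a, b}).card := by
  have he : s \ {a, b} = s \ {a} := by
    ext x; simp only [Finset.mem_sdiff, Finset.mem_insert, Finset.mem_singleton]
    constructor
    · rintro ⟨hx, h2⟩; exact ⟨hx, fun hh => h2 (Or.inl hh)⟩
    · rintro ⟨hx, h2⟩
      exact ⟨hx, by rintro (rfl | rfl); exact h2 rfl; exact hb hx⟩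
  rw [he]; exact sdiff_card2 h a

-- subset of a triple from empty sdiff
lemma subset_triple {A : Finset ℕ} {p q s : ℕ} (h : ¬ (A \ {p, q, s}).Nonempty) :
    A ⊆ {p, q, s} :=
  Finset.sdiff_eq_empty_iff_subset.mp (Finset.not_nonempty_iff_eq_empty.mp h)

lemma mem_of_triple_subset {A : Finset ℕ} {p q s : ℕ} (hA : A.card = 3)
    (h : A ⊆ {p, q, s}) : p ∈ A ∧ q ∈ A ∧ s ∈ A := by
  have hcard : ({p, q, s} : Finset ℕ).card ≤ 3 := by
    refine le_trans (Finset.card_insert_le _ _) ?_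
    have := Finset.card_insert_le q ({s} : Finset ℕ)
    simp only [Finset.card_singleton] at this ⊢; omega
  have := Finset.eq_of_subset_of_card_le h (by omega)
  rw [this]
  refine ⟨Finset.mem_insert_self _ _, ?_, ?_⟩ <;> simp

lemma two_bad_same {A : Finset ℕ} {p q s₁ s₂ : ℕ} (hA : A.card = 3) (hne : s₁ ≠ s₂)
    (h1 : A ⊆ {p, q, s₁}) (h2 : A ⊆ {p, q, s₂}) : False := by
  have hsub : A ⊆ {p, q} := by
    intro x hx
    have a1 := h1 hx; have a2 := h2 hx
    simp only [Finset.mem_insert, Finset.mem_singleton] at a1 a2 ⊢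
    rcases a1 with rfl | rfl | rfl
    · exact Or.inl rfl
    · exact Or.inr rfl
    · rcases a2 with h | h | h
      · exact Or.inl h
      · exact Or.inr h
      · exact absurd h hne
  have : A.card ≤ ({p, q} : Finset ℕ).card := Finset.card_le_card hsub
  have hpq : ({p, q} : Finset ℕ).card ≤ 2 := by
    refine le_trans (Finset.card_insert_le _ _) ?_; simp
  omega

/-- choose `s` in `c` (card ≥ 2) such that both `A` and `B` keep an element
outside `{p,q,s}`; needs `A`, `B` disjoint, cards 3. -/
lemma choose_pair {A B c : Finset ℕ} (hA : A.card = 3) (hB : B.card = 3)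
    (hAB : ∀ x, x ∈ A → x ∈ B → False) {p q : ℕ} (hc : 2 ≤ c.card) :
    ∃ s ∈ c, (A \ {p, q, s}).Nonempty ∧ (B \ {p, q, s}).Nonempty := by
  by_contra hcon
  push_neg at hcon
  obtain ⟨s₁, hs₁, s₂, hs₂, hne⟩ := Finset.one_lt_card.mp (by omega : 1 < c.card)
  have bad : ∀ s ∈ c, A ⊆ {p, q, s} ∨ B ⊆ {p, q, s} := by
    intro s hs
    by_cases hA' : (A \ {p, q, s}).Nonempty
    · exact Or.inr (subset_triple (Finset.not_nonempty_iff_eq_empty.mpr (hcon s hs hA')))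
    · exact Or.inl (subset_triple hA')
  rcases bad s₁ hs₁ with b1 | b1 <;> rcases bad s₂ hs₂ with b2 | b2
  · exact two_bad_same hA hne b1 b2
  · exact hAB p (mem_of_triple_subset hA b1).1 (mem_of_triple_subset hB b2).1
  · exact hAB p (mem_of_triple_subset hA b2).1 (mem_of_triple_subset hB b1).1
  · exact two_bad_same hB hne b1 b2

lemma choose_single {A c : Finset ℕ} (hA : A.card = 3) {p q : ℕ} (hc : 2 ≤ c.card) :
    ∃ s ∈ c, (A \ {p, q, s}).Nonempty := by
  by_contra hcon
  push_neg at hcon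
  obtain ⟨s₁, hs₁, s₂, hs₂, hne⟩ := Finset.one_lt_card.mp (by omega : 1 < c.card)
  exact two_bad_same hA hne (subset_triple (Finset.not_nonempty_iff_eq_empty.mpr (hcon s₁ hs₁)))
    (subset_triple (Finset.not_nonempty_iff_eq_empty.mpr (hcon s₂ hs₂)))

/-- `H₁` is `(3,3,3,3,3,3,3,2)`-list colourable. -/
theorem H1_list_colourable
    (l : Fin 8 → Finset ℕ)
    (hl : ∀ i : Fin 8, i ≠ 7 → (l i).card = 3) (hl7 : (l 7).card = 2) :
    ∃ c : Fin 8 → ℕ, (∀ v, c v ∈ l v) ∧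
      ∀ u v, H1.Adj u v → c u ≠ c v := by
  have h0 : (l 0).card = 3 := hl 0 (by decide)
  have h1 : (l 1).card = 3 := hl 1 (by decide)
  have h2 : (l 2).card = 3 := hl 2 (by decide)
  have h3 : (l 3).card = 3 := hl 3 (by decide)
  have h4 : (l 4).card = 3 := hl 4 (by decide)
  have h5 : (l 5).card = 3 := hl 5 (by decide)
  have h6 : (l 6).card = 3 := hl 6 (by decide)
  by_cases h46 : ((l 4) ∩ (l 6)).Nonempty
  · -- Case A : common colour x for v4, v6
    obtain ⟨x, hx⟩ := h46
    rw [Finset.mem_inter] at hx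
    obtain ⟨c7, hc7, hc7x⟩ := pick1 (s := l 7) (by omega) x
    obtain ⟨c5, hc5, hc5x, hc57⟩ := pick2 (s := l 5) (by omega) x c7
    by_cases hy : (((l 1) ∩ (l 3)) \ {x}).Nonempty
    · -- A1 : common colour y ≠ x for v1, v3
      obtain ⟨y, hy1⟩ := hy
      simp only [Finset.mem_sdiff, Finset.mem_inter, Finset.mem_singleton] at hy1
      obtain ⟨⟨hy1', hy3'⟩, hyx⟩ := hy1
      obtain ⟨c2, hc2, hc2y, hc2c5⟩ := pick2 (s := l 2) (by omega) y c5
      obtain ⟨c0, hc0, hc0y, hc0c2⟩ := pick2 (s := l 0) (by omega) y c2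
      exact build l c0 y c2 y x c5 x c7 hc0 hy1' hc2 hy3' hx.1 hc5 hx.2 hc7
        hc0y hc0c2 hc0y (Ne.symm hc2y) hc2y hyx hc2c5 hyx (Ne.symm hc5x) hc5x
        (Ne.symm hc7x) (Ne.symm hc7x) hc57 hyx
    · -- A2
      have hA2 : ∀ z, z ∈ l 1 → z ∈ l 3 → z = x := by
        intro z hz1 hz3
        by_contra hzx
        exact hy ⟨z, by
          simp only [Finset.mem_sdiff, Finset.mem_inter, Finset.mem_singleton]
          exact ⟨⟨hz1, hz3⟩, hzx⟩⟩
      obtain ⟨c2, hc2, hc2x, hc2c5⟩ := pick2 (s := l 2) (by omega) x c5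
      by_cases hcard1 : 2 ≤ ((l 1) \ {x, c2}).card
      · -- A2a
        obtain ⟨c3, hc3, hc3x, hc3c2⟩ := pick2 (s := l 3) (by omega) x c2
        obtain ⟨c0, hc0, hc0c2, hc0c3⟩ := pick2 (s := l 0) (by omega) c2 c3
        obtain ⟨c1, hc1m, hc1c0⟩ := pick1 hcard1 c0
        simp only [Finset.mem_sdiff, Finset.mem_insert, Finset.mem_singleton,
          not_or] at hc1m
        obtain ⟨hc1, hc1x, hc1c2⟩ := hc1m
        exact build l c0 c1 c2 c3 x c5 x c7 hc0 hc1 hc2 hc3 hx.1 hc5 hx.2 hc7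
          (Ne.symm hc1c0) hc0c2 hc0c3 hc1c2 (Ne.symm hc3c2) hc1x hc2c5 hc3x (Ne.symm hc5x) hc5x
          (Ne.symm hc7x) (Ne.symm hc7x) hc57 hc1x
      · -- A2b
        have hc21 : c2 ∈ l 1 := by
          by_contra hc21
          exact hcard1 (sdiff_pair_card2 (by omega) hc21)
        have hcard3 : 2 ≤ ((l 3) \ {x, c2}).card := by
          by_contra hcard3'
          have hc23 : c2 ∈ l 3 := by
            by_contra hc23
            exact hcard3' (sdiff_pair_card2 (by omega) hc23)
          exact hc2x (hA2 c2 hc21 hc23)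
        obtain ⟨c1, hc1, hc1x, hc1c2⟩ := pick2 (s := l 1) (by omega) x c2
        obtain ⟨c0, hc0, hc0c1, hc0c2⟩ := pick2 (s := l 0) (by omega) c1 c2
        obtain ⟨c3, hc3m, hc3c0⟩ := pick1 hcard3 c0
        simp only [Finset.mem_sdiff, Finset.mem_insert, Finset.mem_singleton,
          not_or] at hc3m
        obtain ⟨hc3, hc3x, hc3c2⟩ := hc3m
        exact build l c0 c1 c2 c3 x c5 x c7 hc0 hc1 hc2 hc3 hx.1 hc5 hx.2 hc7
          hc0c1 hc0c2 (Ne.symm hc3c0) hc1c2 (Ne.symm hc3c2) hc1x hc2c5 hc3x (Ne.symm hc5x) hc5x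
          (Ne.symm hc7x) (Ne.symm hc7x) hc57 hc1x
  · -- l4 ∩ l6 = ∅
    have hd46 : ∀ a, a ∈ l 4 → a ∈ l 6 → False :=
      fun a ha hb => h46 ⟨a, Finset.mem_inter.mpr ⟨ha, hb⟩⟩
    by_cases h13 : ((l 1) ∩ (l 3)).Nonempty
    · -- B-I : common colour y for v1, v3
      obtain ⟨y, hym⟩ := h13
      rw [Finset.mem_inter] at hym
      obtain ⟨c7, hc7⟩ := pick0 (s := l 7) (by omega)
      obtain ⟨c5, hc5m, hA5, hB5⟩ :=
        choose_pair h4 h6 hd46 (p := y) (q := c7) (sdiff_card2 (s := l 5) (by omega) c7)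
      simp only [Finset.mem_sdiff, Finset.mem_singleton] at hc5m
      obtain ⟨hc5, hc5c7⟩ := hc5m
      obtain ⟨c4, hc4m⟩ := hA5
      simp only [Finset.mem_sdiff, Finset.mem_insert, Finset.mem_singleton,
        not_or] at hc4m
      obtain ⟨hc4, hc4y, hc4c7, hc4c5⟩ := hc4m
      obtain ⟨c6, hc6m⟩ := hB5
      simp only [Finset.mem_sdiff, Finset.mem_insert, Finset.mem_singleton,
        not_or] at hc6m
      obtain ⟨hc6, hc6y, hc6c7, hc6c5⟩ := hc6m
      obtain ⟨c2, hc2, hc2y, hc2c5⟩ := pick2 (s := l 2) (by omega) y c5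
      obtain ⟨c0, hc0, hc0y, hc0c2⟩ := pick2 (s := l 0) (by omega) y c2
      exact build l c0 y c2 y c4 c5 c6 c7 hc0 hym.1 hc2 hym.2 hc4 hc5 hc6 hc7
        hc0y hc0c2 hc0y (Ne.symm hc2y) hc2y (Ne.symm hc4y) hc2c5 (Ne.symm hc6y) hc4c5 (Ne.symm hc6c5)
        hc4c7 hc6c7 hc5c7 (Ne.symm hc6y)
    · -- l1 ∩ l3 = ∅
      have hd13 : ∀ a, a ∈ l 1 → a ∈ l 3 → False :=
        fun a ha hb => h13 ⟨a, Finset.mem_inter.mpr ⟨ha, hb⟩⟩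
      by_cases h26 : ((l 2) ∩ (l 6)).Nonempty
      · -- R2 : common colour y for v2, v6
        obtain ⟨y, hym⟩ := h26
        rw [Finset.mem_inter] at hym
        obtain ⟨c7, hc7, hc7y⟩ := pick1 (s := l 7) (by omega) y
        obtain ⟨c5, hc5, hc5y, hc5c7⟩ := pick2 (s := l 5) (by omega) y c7
        obtain ⟨c4, hc4, hc4c7, hc4c5⟩ := pick2 (s := l 4) (by omega) c7 c5
        obtain ⟨c1, hc1, hc1y, hc1c4⟩ := pick2 (s := l 1) (by omega) y c4
        obtain ⟨c0, hc0, hc0y, hc0c1⟩ := pick2 (s := l 0) (by omega) y c1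
        obtain ⟨c3, hc3, hc3y, hc3c0⟩ := pick2 (s := l 3) (by omega) y c0
        exact build l c0 c1 y c3 c4 c5 y c7 hc0 hc1 hym.1 hc3 hc4 hc5 hym.2 hc7
          hc0c1 hc0y (Ne.symm hc3c0) hc1y (Ne.symm hc3y) hc1c4 (Ne.symm hc5y) hc3y hc4c5 hc5y
          hc4c7 (Ne.symm hc7y) hc5c7 hc1y
      · have hd26 : ∀ a, a ∈ l 2 → a ∈ l 6 → False :=
          fun a ha hb => h26 ⟨a, Finset.mem_inter.mpr ⟨ha, hb⟩⟩
        by_cases h24 : ((l 2) ∩ (l 4)).Nonempty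
        · -- R3 : common colour y for v2, v4
          obtain ⟨y, hym⟩ := h24
          rw [Finset.mem_inter] at hym
          obtain ⟨c7, hc7, hc7y⟩ := pick1 (s := l 7) (by omega) y
          obtain ⟨c5, hc5, hc5y, hc5c7⟩ := pick2 (s := l 5) (by omega) y c7
          obtain ⟨c6, hc6, hc6c5, hc6c7⟩ := pick2 (s := l 6) (by omega) c5 c7
          by_cases hcard1 : 2 ≤ ((l 1) \ {y, c6}).card
          · obtain ⟨c3, hc3, hc3y, hc3c6⟩ := pick2 (s := l 3) (by omega) y c6
            obtain ⟨c0, hc0, hc0y, hc0c3⟩ := pick2 (s := l 0) (by omega) y c3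
            obtain ⟨c1, hc1m, hc1c0⟩ := pick1 hcard1 c0
            simp only [Finset.mem_sdiff, Finset.mem_insert, Finset.mem_singleton,
              not_or] at hc1m
            obtain ⟨hc1, hc1y, hc1c6⟩ := hc1m
            exact build l c0 c1 y c3 y c5 c6 c7 hc0 hc1 hym.1 hc3 hym.2 hc5 hc6 hc7
              (Ne.symm hc1c0) hc0y hc0c3 hc1y (Ne.symm hc3y) hc1y (Ne.symm hc5y) hc3c6 (Ne.symm hc5y)
              (Ne.symm hc6c5) (Ne.symm hc7y) hc6c7 hc5c7 hc1c6
          · have hy1 : y ∈ l 1 := by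
              by_contra hy1
              exact hcard1 (by
                rw [Finset.pair_comm]
                exact sdiff_pair_card2 (by omega) hy1)
            have hcard3 : 2 ≤ ((l 3) \ {y, c6}).card := by
              by_contra hcard3'
              have hy3 : y ∈ l 3 := by
                by_contra hy3
                exact hcard3' (by
                  rw [Finset.pair_comm]
                  exact sdiff_pair_card2 (by omega) hy3)
              exact hd13 y hy1 hy3
            obtain ⟨c1, hc1, hc1y, hc1c6⟩ := pick2 (s := l 1) (by omega) y c6
            obtain ⟨c0, hc0, hc0y, hc0c1⟩ := pick2 (s := l 0) (by omega) y c1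
            obtain ⟨c3, hc3m, hc3c0⟩ := pick1 hcard3 c0
            simp only [Finset.mem_sdiff, Finset.mem_insert, Finset.mem_singleton,
              not_or] at hc3m
            obtain ⟨hc3, hc3y, hc3c6⟩ := hc3m
            exact build l c0 c1 y c3 y c5 c6 c7 hc0 hc1 hym.1 hc3 hym.2 hc5 hc6 hc7
              hc0c1 hc0y (Ne.symm hc3c0) hc1y (Ne.symm hc3y) hc1y (Ne.symm hc5y) hc3c6 (Ne.symm hc5y)
              (Ne.symm hc6c5) (Ne.symm hc7y) hc6c7 hc5c7 hc1c6
        · have hd24 : ∀ a, a ∈ l 2 → a ∈ l 4 → False :=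
            fun a ha hb => h24 ⟨a, Finset.mem_inter.mpr ⟨ha, hb⟩⟩
          by_cases h20 : ((l 2) \ (l 0)).Nonempty
          · -- R4 : colour v2 outside l0
            obtain ⟨t, htm⟩ := h20
            rw [Finset.mem_sdiff] at htm
            obtain ⟨ht2, ht0⟩ := htm
            obtain ⟨c7, hc7⟩ := pick0 (s := l 7) (by omega)
            obtain ⟨c5, hc5, hc5t, hc5c7⟩ := pick2 (s := l 5) (by omega) t c7
            obtain ⟨c1, hc1m, hA4, hA6⟩ :=
              choose_pair h4 h6 hd46 (p := c5) (q := c7) (sdiff_card2 (s := l 1) (by omega) t)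
            simp only [Finset.mem_sdiff, Finset.mem_singleton] at hc1m
            obtain ⟨hc1, hc1t⟩ := hc1m
            obtain ⟨c4, hc4m⟩ := hA4
            simp only [Finset.mem_sdiff, Finset.mem_insert, Finset.mem_singleton,
              not_or] at hc4m
            obtain ⟨hc4, hc4c5, hc4c7, hc4c1⟩ := hc4m
            obtain ⟨c6, hc6m⟩ := hA6
            simp only [Finset.mem_sdiff, Finset.mem_insert, Finset.mem_singleton,
              not_or] at hc6m
            obtain ⟨hc6, hc6c5, hc6c7, hc6c1⟩ := hc6m
            obtain ⟨c3, hc3, hc3t, hc3c6⟩ := pick2 (s := l 3) (by omega) t c6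
            obtain ⟨c0, hc0, hc0c1, hc0c3⟩ := pick2 (s := l 0) (by omega) c1 c3
            exact build l c0 c1 t c3 c4 c5 c6 c7 hc0 hc1 ht2 hc3 hc4 hc5 hc6 hc7
              hc0c1 (by rintro rfl; exact ht0 hc0) hc0c3 hc1t (Ne.symm hc3t) (Ne.symm hc4c1)
              (Ne.symm hc5t) hc3c6 hc4c5 (Ne.symm hc6c5) hc4c7 hc6c7 hc5c7 (Ne.symm hc6c1)
          · -- Case C : l2 = l0 =: S with S, l4, l6 pairwise disjoint
            have hsub20 : l 2 ⊆ l 0 :=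
              Finset.sdiff_eq_empty_iff_subset.mp (Finset.not_nonempty_iff_eq_empty.mp h20)
            have h02eq : l 2 = l 0 := Finset.eq_of_subset_of_card_le hsub20 (by omega)
            by_cases h14 : ((l 1) \ (l 4)).Nonempty
            · -- C-ii : colour v1 outside l4
              obtain ⟨c1, hc1m⟩ := h14
              rw [Finset.mem_sdiff] at hc1m
              obtain ⟨hc1, hc1n4⟩ := hc1m
              obtain ⟨c3, hc3, hSc⟩ :
                  ∃ c3 ∈ l 3, 2 ≤ ((l 0) \ {c1, c3}).card := by
                by_cases hc1S : c1 ∈ l 0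
                · have h3S : ((l 3) \ (l 0)).Nonempty := by
                    by_contra h'
                    have hsub : l 3 ⊆ l 0 :=
                      Finset.sdiff_eq_empty_iff_subset.mp
                        (Finset.not_nonempty_iff_eq_empty.mp h')
                    have heq : l 3 = l 0 := Finset.eq_of_subset_of_card_le hsub (by omega)
                    exact hd13 c1 hc1 (by rw [heq]; exact hc1S)
                  obtain ⟨c3, hc3m⟩ := h3S
                  rw [Finset.mem_sdiff] at hc3m
                  exact ⟨c3, hc3m.1, sdiff_pair_card2 (by omega) hc3m.2⟩
                · obtain ⟨c3, hc3⟩ := pick0 (s := l 3) (by omega)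
                  exact ⟨c3, hc3, by
                    rw [Finset.pair_comm]
                    exact sdiff_pair_card2 (by omega) hc1S⟩
              obtain ⟨c6, hc6, hc6c1, hc6c3⟩ := pick2 (s := l 6) (by omega) c1 c3
              obtain ⟨c7, hc7, hc7c6⟩ := pick1 (s := l 7) (by omega) c6
              obtain ⟨c2, hc2m, hl5ne⟩ := choose_single h5 (p := c6) (q := c7) hSc
              simp only [Finset.mem_sdiff, Finset.mem_insert, Finset.mem_singleton,
                not_or] at hc2m
              obtain ⟨hc2, hc2c1, hc2c3⟩ := hc2m
              obtain ⟨c0, hc0m, hc0c2⟩ := pick1 hSc c2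
              simp only [Finset.mem_sdiff, Finset.mem_insert, Finset.mem_singleton,
                not_or] at hc0m
              obtain ⟨hc0, hc0c1, hc0c3⟩ := hc0m
              obtain ⟨c5, hc5m⟩ := hl5ne
              simp only [Finset.mem_sdiff, Finset.mem_insert, Finset.mem_singleton,
                not_or] at hc5m
              obtain ⟨hc5, hc5c6, hc5c7, hc5c2⟩ := hc5m
              obtain ⟨c4, hc4, hc4c5, hc4c7⟩ := pick2 (s := l 4) (by omega) c5 c7
              exact build l c0 c1 c2 c3 c4 c5 c6 c7 hc0 hc1 (by rw [h02eq]; exact hc2)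
                hc3 hc4 hc5 hc6 hc7
                hc0c1 hc0c2 hc0c3 (Ne.symm hc2c1) hc2c3
                (by rintro rfl; exact hc1n4 hc4) (Ne.symm hc5c2) (Ne.symm hc6c3) hc4c5
                hc5c6 hc4c7 (Ne.symm hc7c6) hc5c7 (Ne.symm hc6c1)
            · -- C-i : l1 ⊆ l4
              have hsub14 : l 1 ⊆ l 4 :=
                Finset.sdiff_eq_empty_iff_subset.mp (Finset.not_nonempty_iff_eq_empty.mp h14)
              obtain ⟨c3, hc3⟩ := pick0 (s := l 3) (by omega)
              obtain ⟨c6, hc6, hc6c3⟩ := pick1 (s := l 6) (by omega) c3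
              obtain ⟨c7, hc7, hc7c6⟩ := pick1 (s := l 7) (by omega) c6
              have hSc : 2 ≤ ((l 0) \ {c3}).card := sdiff_card2 (s := l 0) (by omega) c3
              obtain ⟨c2, hc2m, hl5ne⟩ := choose_single h5 (p := c6) (q := c7) hSc
              simp only [Finset.mem_sdiff, Finset.mem_singleton] at hc2m
              obtain ⟨hc2, hc2c3⟩ := hc2m
              obtain ⟨c0, hc0m, hc0c2⟩ := pick1 hSc c2
              simp only [Finset.mem_sdiff, Finset.mem_singleton] at hc0m
              obtain ⟨hc0, hc0c3⟩ := hc0m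
              obtain ⟨c5, hc5m⟩ := hl5ne
              simp only [Finset.mem_sdiff, Finset.mem_insert, Finset.mem_singleton,
                not_or] at hc5m
              obtain ⟨hc5, hc5c6, hc5c7, hc5c2⟩ := hc5m
              obtain ⟨c4, hc4, hc4c5, hc4c7⟩ := pick2 (s := l 4) (by omega) c5 c7
              obtain ⟨c1, hc1, hc1c4, hc1c6⟩ := pick2 (s := l 1) (by omega) c4 c6
              refine build l c0 c1 c2 c3 c4 c5 c6 c7 hc0 hc1 (by rw [h02eq]; exact hc2)
                hc3 hc4 hc5 hc6 hc7
                ?_ hc0c2 hc0c3 ?_ hc2c3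
                hc1c4 (Ne.symm hc5c2) (Ne.symm hc6c3) hc4c5
                hc5c6 hc4c7 (Ne.symm hc7c6) hc5c7 hc1c6
              · intro he
                exact hd24 c0 (by rw [h02eq]; exact hc0) (hsub14 (by rw [he]; exact hc1))
              · intro he
                exact hd24 c2 (by rw [h02eq]; exact hc2) (hsub14 (by rw [← he]; exact hc1))
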